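/- Let Y, T, S be {0,1}-valued random variables with a joint distribution such that P(T=t, S=s) > 0 for all t,s ∈ {0,1} and P(Y=1|T=t, S=s) > 0 for all t,s. Then P(Y=1|T=1)/P(Y=1|T=0) ≥ (min_{s∈{0,1}} P(Y=1|T=1,S=s)) / (max_{s∈{0,1}} P(Y=1|T=0,S=s)). Moreover, if P(Y=1|T=t,S=1) ≠ P(Y=1|T=t,S=0) for both t = 0 and t = 1, then the inequality is strict. -/

import Mathlib

/-- `P y t s` is the joint pmf of `(Y, T, S)` (with `true` encoding `1`);
`pYgT P t` is `P(Y = 1 | T = t)`. -/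
noncomputable def pYgT (P : Bool → Bool → Bool → ℝ) (t : Bool) : ℝ :=
  (∑ s : Bool, P true t s) / (∑ y : Bool, ∑ s : Bool, P y t s)

/-- `pYgTS P t s` is `P(Y = 1 | T = t, S = s)`. -/
noncomputable def pYgTS (P : Bool → Bool → Bool → ℝ) (t s : Bool) : ℝ :=
  P true t s / (∑ y : Bool, P y t s)

lemma avg_ge_min (a b wt wf : ℝ) (hwt : 0 < wt) (hwf : 0 < wf) :
    min a b ≤ (a * wt + b * wf) / (wt + wf) := by
  rw [le_div_iff₀ (by linarith)]
  rcases le_total a b with h | h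
  · rw [min_eq_left h]; nlinarith
  · rw [min_eq_right h]; nlinarith

lemma avg_le_max (a b wt wf : ℝ) (hwt : 0 < wt) (hwf : 0 < wf) :
    (a * wt + b * wf) / (wt + wf) ≤ max a b := by
  rw [div_le_iff₀ (by linarith)]
  rcases le_total a b with h | h
  · rw [max_eq_right h]; nlinarith
  · rw [max_eq_left h]; nlinarith

lemma avg_gt_min (a b wt wf : ℝ) (hwt : 0 < wt) (hwf : 0 < wf) (hab : a ≠ b) :
    min a b < (a * wt + b * wf) / (wt + wf) := by
  rw [lt_div_iff₀ (by linarith)]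
  rcases lt_or_gt_of_ne hab with h | h
  · rw [min_eq_left h.le]; nlinarith
  · rw [min_eq_right h.le]; nlinarith

lemma avg_lt_max (a b wt wf : ℝ) (hwt : 0 < wt) (hwf : 0 < wf) (hab : a ≠ b) :
    (a * wt + b * wf) / (wt + wf) < max a b := by
  rw [div_lt_iff₀ (by linarith)]
  rcases lt_or_gt_of_ne hab with h | h
  · rw [max_eq_right h.le]; nlinarith
  · rw [max_eq_left h.le]; nlinarith

theorem stmt12 (P : Bool → Bool → Bool → ℝ)
    (hpos : ∀ y t s, 0 ≤ P y t s)
    (hsum : ∑ y : Bool, ∑ t : Bool, ∑ s : Bool, P y t s = 1)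
    (hTS : ∀ t s, 0 < ∑ y : Bool, P y t s)
    (hY : ∀ t s, 0 < pYgTS P t s) :
    min (pYgTS P true true) (pYgTS P true false) /
        max (pYgTS P false true) (pYgTS P false false) ≤
      pYgT P true / pYgT P false ∧
    ((∀ t, pYgTS P t true ≠ pYgTS P t false) →
      min (pYgTS P true true) (pYgTS P true false) /
          max (pYgTS P false true) (pYgTS P false false) <
        pYgT P true / pYgT P false) := by
  have key : ∀ t, pYgT P t =
      (pYgTS P t true * (∑ y : Bool, P y t true) +
        pYgTS P t false * (∑ y : Bool, P y t false)) /
      ((∑ y : Bool, P y t true) + (∑ y : Bool, P y t false)) := by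
    intro t
    have h1 : pYgTS P t true * (∑ y : Bool, P y t true) = P true t true :=
      div_mul_cancel₀ _ (hTS t true).ne'
    have h2 : pYgTS P t false * (∑ y : Bool, P y t false) = P true t false :=
      div_mul_cancel₀ _ (hTS t false).ne'
    rw [h1, h2]
    simp [pYgT, Fintype.sum_bool]
    ring_nf
  have hw : ∀ t s, 0 < ∑ y : Bool, P y t s := hTS
  -- bounds
  have hmin : ∀ t, min (pYgTS P t true) (pYgTS P t false) ≤ pYgT P t := by
    intro t; rw [key t]; exact avg_ge_min _ _ _ _ (hw t true) (hw t false)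
  have hmax : ∀ t, pYgT P t ≤ max (pYgTS P t true) (pYgTS P t false) := by
    intro t; rw [key t]; exact avg_le_max _ _ _ _ (hw t true) (hw t false)
  have hminpos : ∀ t, 0 < min (pYgTS P t true) (pYgTS P t false) :=
    fun t => lt_min (hY t true) (hY t false)
  have hYpos : ∀ t, 0 < pYgT P t := fun t => lt_of_lt_of_le (hminpos t) (hmin t)
  constructor
  · exact div_le_div₀ (hYpos true).le (hmin true) (hYpos false) (hmax false)
  · intro hne
    have h1 : min (pYgTS P true true) (pYgTS P true false) < pYgT P true := by
      rw [key true]; exact avg_gt_min _ _ _ _ (hw true true) (hw true false) (hne true)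
    have h0 : pYgT P false < max (pYgTS P false true) (pYgTS P false false) := by
      rw [key false]; exact avg_lt_max _ _ _ _ (hw false true) (hw false false) (hne false)
    exact div_lt_div₀ h1 h0.le (hYpos true).le (hYpos false)
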